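/- arXiv:1804.03688 — 3 statements merged into one kernel-verified Lean document; each statement's English description precedes it below -/
import Mathlib

section
/- For the triangle T with vertices (0,-1), (0,1), (1,0) and the convex function f(x,y) = x, the average of f over T is strictly greater than the average of f over the boundary of T; explicitly, the average over T equals 1/3 while the average over ∂T equals 1 - √2/2, and 1/3 > 1 - √2/2. Hence the 45-45-90 triangle is not of Jensen-type. -/
open MeasureTheory Set
open scoped ENNReal

noncomputable section JensenAux

abbrev E2 := EuclideanSpace ℝ (Fin 2)

/-! ### Sets -/

def Tset : Set E2 := {p | 0 ≤ p 0 ∧ p 0 + p 1 ≤ 1 ∧ p 0 - p 1 ≤ 1}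
def S1 : Set E2 := {p | p 0 = 0 ∧ p 1 ∈ Icc (-1:ℝ) 1}
def S2 : Set E2 := {p | p 0 + p 1 = 1 ∧ p 0 ∈ Icc (0:ℝ) 1}
def S3 : Set E2 := {p | p 0 - p 1 = 1 ∧ p 0 ∈ Icc (0:ℝ) 1}

lemma cont0 : Continuous (fun p : E2 => p 0) := (EuclideanSpace.proj (0 : Fin 2)).continuous
lemma cont1 : Continuous (fun p : E2 => p 1) := (EuclideanSpace.proj (1 : Fin 2)).continuous

/-! ### Convex hull description -/

lemma convex_Tset : Convex ℝ Tset := by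
  rintro x ⟨hx1, hx2, hx3⟩ y ⟨hy1, hy2, hy3⟩ a b ha hb hab
  refine ⟨?_, ?_, ?_⟩
  · show (0:ℝ) ≤ (a • x + b • y) 0
    simp only [PiLp.add_apply, PiLp.smul_apply, smul_eq_mul]
    nlinarith
  · show (a • x + b • y) 0 + (a • x + b • y) 1 ≤ 1
    simp only [PiLp.add_apply, PiLp.smul_apply, smul_eq_mul]
    nlinarith
  · show (a • x + b • y) 0 - (a • x + b • y) 1 ≤ 1
    simp only [PiLp.add_apply, PiLp.smul_apply, smul_eq_mul]
    nlinarith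

lemma hull_eq : convexHull ℝ {(!₂[0, -1] : E2), !₂[0, 1], !₂[1, 0]} = Tset := by
  apply Subset.antisymm
  · apply convexHull_min _ convex_Tset
    rintro p (rfl | rfl | rfl) <;> refine ⟨?_, ?_, ?_⟩ <;> norm_num [Tset]
  · rintro p ⟨h1, h2, h3⟩
    set w : Fin 3 → ℝ := ![(1 - p 0 - p 1)/2, (1 - p 0 + p 1)/2, p 0] with hw
    set z : Fin 3 → E2 := ![!₂[0, -1], !₂[0, 1], !₂[1, 0]] with hz
    have key : ∑ i : Fin 3, w i • z i = p := by
      have k0 : (∑ i : Fin 3, w i • z i) 0 = p 0 := by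
        simp [Fin.sum_univ_three, PiLp.add_apply, PiLp.smul_apply, hw, hz]
      have k1 : (∑ i : Fin 3, w i • z i) 1 = p 1 := by
        simp [Fin.sum_univ_three, PiLp.add_apply, PiLp.smul_apply, hw, hz]
        ring
      ext i; fin_cases i
      · exact k0
      · exact k1
    rw [← key]
    apply (convex_convexHull ℝ _).sum_mem
    · intro i _
      fin_cases i <;> simp [hw] <;> linarith
    · simp [hw, Fin.sum_univ_three]; ring
    · intro i _
      apply subset_convexHull
      fin_cases i <;> simp [hz]

/-! ### Topology -/

lemma isClosed_Tset : IsClosed Tset := by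
  have : Tset = (fun p : E2 => p 0) ⁻¹' (Ici 0) ∩
      ((fun p : E2 => p 0 + p 1) ⁻¹' (Iic 1) ∩ (fun p : E2 => p 0 - p 1) ⁻¹' (Iic 1)) := by
    ext p; simp [Tset, and_assoc]
  rw [this]
  exact (isClosed_Ici.preimage cont0).inter ((isClosed_Iic.preimage (cont0.add cont1)).inter
    (isClosed_Iic.preimage (cont0.sub cont1)))

lemma interior_Tset : interior Tset = {p : E2 | 0 < p 0 ∧ p 0 + p 1 < 1 ∧ p 0 - p 1 < 1} := by
  apply Subset.antisymm
  · intro p hp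
    obtain ⟨ε, hε, hball⟩ := Metric.isOpen_iff.1 isOpen_interior p hp
    have hballT : Metric.ball p ε ⊆ Tset := hball.trans interior_subset
    have hd : ∀ q : E2, dist q p < ε → q ∈ Tset := fun q hq => hballT hq
    set e0 : E2 := EuclideanSpace.single (0 : Fin 2) (1:ℝ) with he0
    have hne : ‖e0‖ = 1 := by rw [he0, EuclideanSpace.norm_single]; norm_num
    have hsub : ∀ c : ℝ, |c| < ε → p + c • e0 ∈ Tset := by
      intro c hc
      apply hd
      rw [dist_eq_norm]
      simpa [norm_smul, hne] using hc
    have h1 := hsub (ε/2) (by rw [abs_of_pos (by linarith)]; linarith)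
    have h2 := hsub (-(ε/2)) (by rw [abs_of_neg (by linarith)]; linarith)
    have e00 : e0 0 = 1 := by simp [he0, EuclideanSpace.single_apply]
    have e01 : e0 1 = 0 := by simp [he0, EuclideanSpace.single_apply]
    obtain ⟨a1, a2, a3⟩ := h1
    obtain ⟨b1, b2, b3⟩ := h2
    simp only [PiLp.add_apply, PiLp.smul_apply, smul_eq_mul, e00, e01] at a1 a2 a3 b1 b2 b3
    refine ⟨by linarith, by linarith, by linarith⟩
  · apply interior_maximal
    · rintro p ⟨h1, h2, h3⟩; exact ⟨le_of_lt h1, le_of_lt h2, le_of_lt h3⟩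
    · have : {p : E2 | 0 < p 0 ∧ p 0 + p 1 < 1 ∧ p 0 - p 1 < 1} =
          (fun p : E2 => p 0) ⁻¹' (Ioi 0) ∩
          ((fun p : E2 => p 0 + p 1) ⁻¹' (Iio 1) ∩ (fun p : E2 => p 0 - p 1) ⁻¹' (Iio 1)) := by
        ext p; simp [and_assoc]
      rw [this]
      exact (isOpen_Ioi.preimage cont0).inter ((isOpen_Iio.preimage (cont0.add cont1)).inter
        (isOpen_Iio.preimage (cont0.sub cont1)))

lemma frontier_Tset : frontier Tset = S1 ∪ S2 ∪ S3 := by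
  rw [frontier, isClosed_Tset.closure_eq, interior_Tset]
  ext p
  simp only [mem_diff, mem_setOf_eq, mem_union, S1, S2, S3, Tset, mem_Icc, mem_setOf_eq]
  constructor
  · rintro ⟨⟨h1, h2, h3⟩, hn⟩
    push_neg at hn
    rcases lt_or_eq_of_le h1 with h1' | h1'
    · rcases lt_or_eq_of_le h2 with h2' | h2'
      · have h3' : p 0 - p 1 = 1 := le_antisymm h3 (by linarith [hn h1' h2'])
        right; exact ⟨h3', h1, by linarith⟩
      · left; right; exact ⟨h2', h1, by linarith⟩
    · left; left; exact ⟨h1'.symm, by constructor <;> linarith⟩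
  · intro h
    rcases h with (h | h) | h
    · obtain ⟨h1, h2, h3⟩ := h
      exact ⟨⟨by linarith, by linarith, by linarith⟩, fun hk => by
        obtain ⟨k1, k2, k3⟩ := hk; linarith⟩
    · obtain ⟨h1, h2, h3⟩ := h
      exact ⟨⟨by linarith, by linarith, by linarith⟩, fun hk => by
        obtain ⟨k1, k2, k3⟩ := hk; linarith⟩
    · obtain ⟨h1, h2, h3⟩ := h
      exact ⟨⟨by linarith, by linarith, by linarith⟩, fun hk => by
        obtain ⟨k1, k2, k3⟩ := hk; linarith⟩

/-! ### Parametrizations -/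

def sq2 : ℝ := Real.sqrt 2
lemma sq2_pos : 0 < sq2 := Real.sqrt_pos.2 (by norm_num)
lemma sq2_sq : sq2 * sq2 = 2 := Real.mul_self_sqrt (by norm_num)

def cc : ℝ := sq2 / 2
lemma cc_pos : 0 < cc := by have := sq2_pos; unfold cc; linarith
lemma cc_sq : cc * cc = 1/2 := by unfold cc; rw [div_mul_div_comm, sq2_sq]; norm_num
lemma cc_sq2 : cc * sq2 = 1 := by unfold cc; rw [div_mul_eq_mul_div, sq2_sq]; norm_num
lemma sq2_cc : sq2 * cc = 1 := by rw [mul_comm]; exact cc_sq2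

def w1 : E2 := !₂[0, 1]
def w2 : E2 := !₂[cc, -cc]
def w3 : E2 := !₂[cc, cc]
def v2 : E2 := !₂[0, 1]
def v3 : E2 := !₂[0, -1]

def phi1 (t : ℝ) : E2 := (0 : E2) + t • w1
def phi2 (t : ℝ) : E2 := v2 + t • w2
def phi3 (t : ℝ) : E2 := v3 + t • w3

lemma norm_w1 : ‖w1‖ = 1 := by
  rw [EuclideanSpace.norm_eq]
  simp [w1, Fin.sum_univ_two]
lemma norm_w2 : ‖w2‖ = 1 := by
  rw [EuclideanSpace.norm_eq]
  simp only [w2, Fin.sum_univ_two, Matrix.cons_val_zero, Matrix.cons_val_one, Matrix.head_cons,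
    Real.norm_eq_abs, sq_abs]
  rw [show cc ^ 2 + (-cc) ^ 2 = 1 by nlinarith [cc_sq]]
  exact Real.sqrt_one
lemma norm_w3 : ‖w3‖ = 1 := by
  rw [EuclideanSpace.norm_eq]
  simp only [w3, Fin.sum_univ_two, Matrix.cons_val_zero, Matrix.cons_val_one, Matrix.head_cons,
    Real.norm_eq_abs, sq_abs]
  rw [show cc ^ 2 + cc ^ 2 = 1 by nlinarith [cc_sq]]
  exact Real.sqrt_one

lemma isometry_seg {E : Type*} [NormedAddCommGroup E] [NormedSpace ℝ E] (v w : E) (hw : ‖w‖ = 1) :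
    Isometry (fun t : ℝ => v + t • w) := by
  intro s t
  rw [edist_dist, edist_dist]
  congr 1
  rw [dist_eq_norm, dist_eq_norm]
  simp only [add_sub_add_left_eq_sub, ← sub_smul, norm_smul, hw, mul_one, Real.norm_eq_abs]

lemma isometry_phi1 : Isometry phi1 := isometry_seg (0 : E2) w1 norm_w1
lemma isometry_phi2 : Isometry phi2 := isometry_seg v2 w2 norm_w2
lemma isometry_phi3 : Isometry phi3 := isometry_seg v3 w3 norm_w3

lemma phi1_apply0 (t : ℝ) : phi1 t 0 = 0 := by
  simp [phi1, w1, PiLp.add_apply, PiLp.smul_apply]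
lemma phi1_apply1 (t : ℝ) : phi1 t 1 = t := by
  simp [phi1, w1, PiLp.add_apply, PiLp.smul_apply]
lemma phi2_apply0 (t : ℝ) : phi2 t 0 = t * cc := by
  simp [phi2, v2, w2, PiLp.add_apply, PiLp.smul_apply]
lemma phi2_apply1 (t : ℝ) : phi2 t 1 = 1 - t * cc := by
  simp [phi2, v2, w2, PiLp.add_apply, PiLp.smul_apply]; ring
lemma phi3_apply0 (t : ℝ) : phi3 t 0 = t * cc := by
  simp [phi3, v3, w3, PiLp.add_apply, PiLp.smul_apply]
lemma phi3_apply1 (t : ℝ) : phi3 t 1 = t * cc - 1 := by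
  simp [phi3, v3, w3, PiLp.add_apply, PiLp.smul_apply]; ring

lemma S1_eq : S1 = phi1 '' Icc (-1) 1 := by
  ext p
  constructor
  · rintro ⟨h0, h1⟩
    refine ⟨p 1, h1, ?_⟩
    ext i; fin_cases i
    · show phi1 (p 1) 0 = p 0
      rw [phi1_apply0]; exact h0.symm
    · show phi1 (p 1) 1 = p 1
      rw [phi1_apply1]
  · rintro ⟨t, ht, rfl⟩
    exact ⟨phi1_apply0 t, by rw [phi1_apply1]; exact ht⟩

lemma S2_eq : S2 = phi2 '' Icc 0 sq2 := by
  ext p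
  constructor
  · rintro ⟨h0, h1, h2⟩
    refine ⟨p 0 * sq2, ⟨by nlinarith [sq2_pos], by nlinarith [sq2_pos, sq2_sq]⟩, ?_⟩
    have k0 : phi2 (p 0 * sq2) 0 = p 0 := by
      rw [phi2_apply0, mul_assoc, sq2_cc, mul_one]
    ext i; fin_cases i
    · exact k0
    · show phi2 (p 0 * sq2) 1 = p 1
      rw [phi2_apply1]
      rw [phi2_apply0] at k0
      rw [k0]; linarith
  · rintro ⟨t, ⟨ht0, ht1⟩, rfl⟩
    refine ⟨by rw [phi2_apply0, phi2_apply1]; ring, ?_, ?_⟩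
    · rw [phi2_apply0]; exact mul_nonneg ht0 cc_pos.le
    · rw [phi2_apply0]
      calc t * cc ≤ sq2 * cc := by nlinarith [cc_pos]
      _ = 1 := sq2_cc

lemma S3_eq : S3 = phi3 '' Icc 0 sq2 := by
  ext p
  constructor
  · rintro ⟨h0, h1, h2⟩
    refine ⟨p 0 * sq2, ⟨by nlinarith [sq2_pos], by nlinarith [sq2_pos, sq2_sq]⟩, ?_⟩
    have k0 : phi3 (p 0 * sq2) 0 = p 0 := by
      rw [phi3_apply0, mul_assoc, sq2_cc, mul_one]
    ext i; fin_cases i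
    · exact k0
    · show phi3 (p 0 * sq2) 1 = p 1
      rw [phi3_apply1]
      rw [phi3_apply0] at k0
      rw [k0]; linarith
  · rintro ⟨t, ⟨ht0, ht1⟩, rfl⟩
    refine ⟨by rw [phi3_apply0, phi3_apply1]; ring, ?_, ?_⟩
    · rw [phi3_apply0]; exact mul_nonneg ht0 cc_pos.le
    · rw [phi3_apply0]
      calc t * cc ≤ sq2 * cc := by nlinarith [cc_pos]
      _ = 1 := sq2_cc

/-! ### Hausdorff measure tools -/

lemma restrict_map {E : Type*} [NormedAddCommGroup E] [NormedSpace ℝ E] [MeasurableSpace E]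
    [BorelSpace E] [SecondCountableTopology E]
    (φ : ℝ → E) (hφ : Isometry φ) (s : Set ℝ) :
    (μH[(1:ℝ)] : Measure E).restrict (φ '' s) = Measure.map φ ((volume : Measure ℝ).restrict s) := by
  ext A hA
  rw [Measure.restrict_apply hA, Measure.map_apply hφ.continuous.measurable hA,
    Measure.restrict_apply (hφ.continuous.measurable hA), ← MeasureTheory.hausdorffMeasure_real,
    ← hφ.hausdorffMeasure_image (Or.inl zero_le_one) (φ ⁻¹' A ∩ s),
    Set.image_inter hφ.injective, Set.image_preimage_eq_inter_range]
  congr 1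
  rw [Set.inter_assoc]
  congr 1
  exact (Set.inter_eq_right.2 (Set.image_subset_range φ s)).symm

lemma integral_image_isometry (φ : ℝ → E2) (hφ : Isometry φ) (s : Set ℝ) (g : E2 → ℝ)
    (hg : Continuous g) :
    ∫ x in φ '' s, g x ∂(μH[(1:ℝ)] : Measure E2) = ∫ t in s, g (φ t) := by
  rw [show (∫ x in φ '' s, g x ∂(μH[(1:ℝ)] : Measure E2)) =
      ∫ x, g x ∂((μH[(1:ℝ)] : Measure E2).restrict (φ '' s)) from rfl,
    restrict_map φ hφ s,
    integral_map hφ.continuous.aemeasurable hg.aestronglyMeasurable]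

lemma measure_image_isometry (φ : ℝ → E2) (hφ : Isometry φ) (s : Set ℝ) :
    (μH[(1:ℝ)] : Measure E2) (φ '' s) = volume s := by
  rw [← Measure.restrict_apply_univ, restrict_map _ hφ,
    Measure.map_apply hφ.continuous.measurable MeasurableSet.univ]
  simp

lemma haus_singleton (x : E2) : (μH[(1:ℝ)] : Measure E2) {x} = 0 := by
  have hiso : Isometry (fun t : ℝ => x + t • w1) := isometry_seg x w1 norm_w1
  have himg : {x} = (fun t : ℝ => x + t • w1) '' {0} := by
    rw [Set.image_singleton]; simp
  rw [himg, measure_image_isometry _ hiso]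
  simp

lemma integrableOn_image_isometry (φ : ℝ → E2) (hφ : Isometry φ) (a b : ℝ)
    (g : E2 → ℝ) (hg : Continuous g) :
    IntegrableOn g (φ '' Icc a b) (μH[(1:ℝ)] : Measure E2) := by
  unfold IntegrableOn
  rw [restrict_map _ hφ]
  rw [(hφ.isClosedEmbedding.measurableEmbedding).integrable_map_iff]
  exact (hg.comp hφ.continuous).integrableOn_Icc

section Boundary

local notation "μ1" => (μH[(1:ℝ)] : Measure E2)

lemma measurableSet_S1 : MeasurableSet S1 := by
  rw [S1_eq]; exact ((isCompact_Icc.image isometry_phi1.continuous).isClosed).measurableSet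
lemma measurableSet_S2 : MeasurableSet S2 := by
  rw [S2_eq]; exact ((isCompact_Icc.image isometry_phi2.continuous).isClosed).measurableSet
lemma measurableSet_S3 : MeasurableSet S3 := by
  rw [S3_eq]; exact ((isCompact_Icc.image isometry_phi3.continuous).isClosed).measurableSet

lemma meas_S1 : μ1 S1 = ENNReal.ofReal 2 := by
  rw [S1_eq, measure_image_isometry _ isometry_phi1, Real.volume_Icc]
  norm_num
lemma meas_S2 : μ1 S2 = ENNReal.ofReal sq2 := by
  rw [S2_eq, measure_image_isometry _ isometry_phi2, Real.volume_Icc, sub_zero]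
lemma meas_S3 : μ1 S3 = ENNReal.ofReal sq2 := by
  rw [S3_eq, measure_image_isometry _ isometry_phi3, Real.volume_Icc, sub_zero]

lemma inter12 : S1 ∩ S2 ⊆ {(!₂[0, 1] : E2)} := by
  rintro p ⟨⟨a0, _⟩, ⟨b0, _⟩⟩
  have : p 1 = 1 := by rw [a0] at b0; linarith
  simp only [mem_singleton_iff]
  ext i; fin_cases i
  · show p 0 = (!₂[(0:ℝ), 1] : E2) 0; simpa using a0
  · show p 1 = (!₂[(0:ℝ), 1] : E2) 1; simpa using this

lemma inter13 : S1 ∩ S3 ⊆ {(!₂[0, -1] : E2)} := by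
  rintro p ⟨⟨a0, _⟩, ⟨b0, _⟩⟩
  have : p 1 = -1 := by rw [a0] at b0; linarith
  simp only [mem_singleton_iff]
  ext i; fin_cases i
  · show p 0 = (!₂[(0:ℝ), -1] : E2) 0; simpa using a0
  · show p 1 = (!₂[(0:ℝ), -1] : E2) 1; simpa using this

lemma inter23 : S2 ∩ S3 ⊆ {(!₂[1, 0] : E2)} := by
  rintro p ⟨⟨a0, _⟩, ⟨b0, _⟩⟩
  have h0 : p 0 = 1 := by linarith
  have h1 : p 1 = 0 := by linarith
  simp only [mem_singleton_iff]
  ext i; fin_cases i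
  · show p 0 = (!₂[(1:ℝ), 0] : E2) 0; simpa using h0
  · show p 1 = (!₂[(1:ℝ), 0] : E2) 1; simpa using h1

lemma null12 : μ1 (S1 ∩ S2) = 0 :=
  measure_mono_null inter12 (haus_singleton _)
lemma nullU3 : μ1 ((S1 ∪ S2) ∩ S3) = 0 := by
  rw [Set.union_inter_distrib_right]
  exact measure_union_null (measure_mono_null inter13 (haus_singleton _))
    (measure_mono_null inter23 (haus_singleton _))

lemma meas_boundary : μ1 (S1 ∪ S2 ∪ S3) = ENNReal.ofReal (2 + sq2 + sq2) := by
  rw [measure_union₀ measurableSet_S3.nullMeasurableSet nullU3,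
    measure_union₀ measurableSet_S2.nullMeasurableSet null12,
    meas_S1, meas_S2, meas_S3, ← ENNReal.ofReal_add (by norm_num) sq2_pos.le,
    ← ENNReal.ofReal_add (by linarith [sq2_pos]) sq2_pos.le]

lemma intOn_S1 : IntegrableOn (fun p : E2 => p 0) S1 μ1 := by
  rw [S1_eq]; exact integrableOn_image_isometry _ isometry_phi1 _ _ _ cont0
lemma intOn_S2 : IntegrableOn (fun p : E2 => p 0) S2 μ1 := by
  rw [S2_eq]; exact integrableOn_image_isometry _ isometry_phi2 _ _ _ cont0
lemma intOn_S3 : IntegrableOn (fun p : E2 => p 0) S3 μ1 := by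
  rw [S3_eq]; exact integrableOn_image_isometry _ isometry_phi3 _ _ _ cont0

lemma int_S1 : ∫ x in S1, x 0 ∂μ1 = 0 := by
  rw [S1_eq, integral_image_isometry _ isometry_phi1 _ _ cont0]
  simp [phi1_apply0]

lemma int_Icc_linear : ∫ t in Icc (0:ℝ) sq2, t * cc = cc := by
  rw [MeasureTheory.integral_Icc_eq_integral_Ioc,
    ← intervalIntegral.integral_of_le sq2_pos.le]
  have hderiv : ∀ x ∈ uIcc (0:ℝ) sq2, HasDerivAt (fun t : ℝ => t ^ 2 * (cc/2)) (x * cc) x := by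
    intro x _
    have h := (hasDerivAt_pow 2 x).mul_const (cc/2)
    refine h.congr_deriv ?_
    push_cast
    ring
  rw [intervalIntegral.integral_eq_sub_of_hasDerivAt hderiv
    ((continuous_id.mul continuous_const).intervalIntegrable _ _)]
  have : sq2 ^ 2 = 2 := by rw [sq]; exact sq2_sq
  rw [this]
  ring

lemma int_S2 : ∫ x in S2, x 0 ∂μ1 = cc := by
  rw [S2_eq, integral_image_isometry _ isometry_phi2 _ _ cont0]
  simp only [phi2_apply0]
  exact int_Icc_linear

lemma int_S3 : ∫ x in S3, x 0 ∂μ1 = cc := by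
  rw [S3_eq, integral_image_isometry _ isometry_phi3 _ _ cont0]
  simp only [phi3_apply0]
  exact int_Icc_linear

lemma int_boundary : ∫ x in S1 ∪ S2 ∪ S3, x 0 ∂μ1 = sq2 := by
  rw [integral_union_ae nullU3 measurableSet_S3.nullMeasurableSet
      ((intOn_S1.union intOn_S2)) intOn_S3,
    integral_union_ae null12 measurableSet_S2.nullMeasurableSet
      intOn_S1 intOn_S2,
    int_S1, int_S2, int_S3]
  unfold cc
  ring

lemma avg_boundary : ⨍ x in S1 ∪ S2 ∪ S3, x 0 ∂μ1 = 1 - sq2 / 2 := by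
  rw [setAverage_eq, int_boundary, measureReal_def, meas_boundary, ENNReal.toReal_ofReal (by linarith [sq2_pos]),
    smul_eq_mul]
  have h2 : sq2 * sq2 = 2 := sq2_sq
  have hpos : (0:ℝ) < 2 + sq2 + sq2 := by linarith [sq2_pos]
  field_simp
  nlinarith [sq2_pos]

end Boundary



section Area

def T' : Set (ℝ × ℝ) := {q | 0 ≤ q.1 ∧ q.1 + q.2 ≤ 1 ∧ q.1 - q.2 ≤ 1}

lemma isClosed_T' : IsClosed T' := by
  have : T' = (fun q : ℝ × ℝ => q.1) ⁻¹' (Ici 0) ∩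
      ((fun q : ℝ × ℝ => q.1 + q.2) ⁻¹' (Iic 1) ∩ (fun q : ℝ × ℝ => q.1 - q.2) ⁻¹' (Iic 1)) := by
    ext q; simp [T', and_assoc]
  rw [this]
  exact (isClosed_Ici.preimage continuous_fst).inter
    ((isClosed_Iic.preimage (continuous_fst.add continuous_snd)).inter
      (isClosed_Iic.preimage (continuous_fst.sub continuous_snd)))

lemma isCompact_T' : IsCompact T' := by
  refine (isCompact_Icc.prod isCompact_Icc : IsCompact (Icc (0:ℝ) 1 ×ˢ Icc (-1:ℝ) 1)
    ).of_isClosed_subset isClosed_T' ?_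
  rintro ⟨x, y⟩ ⟨h1, h2, h3⟩
  exact ⟨⟨h1, by dsimp at *; linarith⟩, ⟨by dsimp at *; linarith, by dsimp at *; linarith⟩⟩

lemma measurableSet_T' : MeasurableSet T' := isClosed_T'.measurableSet

lemma slice_T' (x : ℝ) (hx : 0 ≤ x) : {y : ℝ | (x, y) ∈ T'} = Icc (x - 1) (1 - x) := by
  ext y
  simp only [T', mem_setOf_eq, mem_Icc]
  constructor
  · rintro ⟨_, h2, h3⟩; constructor <;> linarith
  · rintro ⟨h1, h2⟩; exact ⟨hx, by linarith, by linarith⟩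

lemma fubini_T' (F : ℝ × ℝ → ℝ) (hF : Continuous F) :
    ∫ q in T', F q = ∫ x : ℝ, ∫ y : ℝ, T'.indicator F (x, y) := by
  rw [← integral_indicator measurableSet_T']
  have hInt : Integrable (T'.indicator F) := by
    rw [integrable_indicator_iff measurableSet_T']
    exact hF.continuousOn.integrableOn_compact isCompact_T'
  rw [Measure.volume_eq_prod] at hInt ⊢
  exact MeasureTheory.integral_prod _ hInt

lemma inner_int_fst (x : ℝ) :
    ∫ y : ℝ, T'.indicator (fun q => q.1) (x, y) =
      (Icc (0:ℝ) 1).indicator (fun x => x * (2 - 2*x)) x := by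
  by_cases hx : 0 ≤ x
  · have hset : ∀ y : ℝ, T'.indicator (fun q => q.1) (x, y) =
        (Icc (x-1) (1-x)).indicator (fun _ => x) y := by
      intro y
      by_cases hy : (x, y) ∈ T'
      · rw [indicator_of_mem hy, indicator_of_mem]
        rw [← slice_T' x hx]; exact hy
      · rw [indicator_of_notMem hy, indicator_of_notMem]
        rw [← slice_T' x hx]; exact hy
    simp_rw [hset]
    rw [integral_indicator measurableSet_Icc, setIntegral_const, Real.volume_real_Icc, smul_eq_mul]
    by_cases hx1 : x ≤ 1
    · rw [indicator_of_mem (mem_Icc.2 ⟨hx, hx1⟩), max_eq_left (by linarith)]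
      ring
    · rw [indicator_of_notMem (by simp [mem_Icc]; intro; linarith),
        max_eq_right (by linarith), zero_mul]
  · have hset : ∀ y : ℝ, T'.indicator (fun q => q.1) (x, y) = 0 := by
      intro y
      apply indicator_of_notMem
      intro h
      exact hx h.1
    simp_rw [hset]
    rw [indicator_of_notMem (by simp [mem_Icc]; intro h; exact absurd h hx)]
    simp

end Area

section Area2

lemma inner_int_one (x : ℝ) :
    ∫ y : ℝ, T'.indicator (fun _ => (1:ℝ)) (x, y) =
      (Icc (0:ℝ) 1).indicator (fun x => 2 - 2*x) x := by
  by_cases hx : 0 ≤ x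
  · have hset : ∀ y : ℝ, T'.indicator (fun _ => (1:ℝ)) (x, y) =
        (Icc (x-1) (1-x)).indicator (fun _ => (1:ℝ)) y := by
      intro y
      by_cases hy : (x, y) ∈ T'
      · rw [indicator_of_mem hy, indicator_of_mem]
        rw [← slice_T' x hx]; exact hy
      · rw [indicator_of_notMem hy, indicator_of_notMem]
        rw [← slice_T' x hx]; exact hy
    simp_rw [hset]
    rw [integral_indicator measurableSet_Icc, setIntegral_const, Real.volume_real_Icc, smul_eq_mul,
      mul_one]
    by_cases hx1 : x ≤ 1
    · rw [indicator_of_mem (mem_Icc.2 ⟨hx, hx1⟩), max_eq_left (by linarith)]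
      ring
    · rw [indicator_of_notMem (by simp [mem_Icc]; intro; linarith),
        max_eq_right (by linarith)]
  · have hset : ∀ y : ℝ, T'.indicator (fun _ => (1:ℝ)) (x, y) = 0 := by
      intro y
      apply indicator_of_notMem
      intro h
      exact hx h.1
    simp_rw [hset]
    rw [indicator_of_notMem (by simp [mem_Icc]; intro h; exact absurd h hx)]
    simp

lemma int_T'_fst : ∫ q in T', q.1 = 1/3 := by
  rw [fubini_T' _ continuous_fst]
  simp_rw [inner_int_fst]
  rw [integral_indicator measurableSet_Icc, MeasureTheory.integral_Icc_eq_integral_Ioc,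
    ← intervalIntegral.integral_of_le (by norm_num : (0:ℝ) ≤ 1)]
  have hderiv : ∀ x ∈ uIcc (0:ℝ) 1, HasDerivAt (fun t : ℝ => t ^ 2 - (2/3) * t ^ 3)
      (x * (2 - 2*x)) x := by
    intro x _
    have h := (hasDerivAt_pow 2 x).sub ((hasDerivAt_pow 3 x).const_mul (2/3 : ℝ))
    refine h.congr_deriv ?_
    push_cast
    ring
  rw [intervalIntegral.integral_eq_sub_of_hasDerivAt hderiv
    ((continuous_id.mul (continuous_const.sub (continuous_const.mul
      continuous_id))).intervalIntegrable _ _)]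
  norm_num

lemma int_T'_one : ∫ q in T', (1:ℝ) = 1 := by
  rw [fubini_T' _ continuous_const]
  simp_rw [inner_int_one]
  rw [integral_indicator measurableSet_Icc, MeasureTheory.integral_Icc_eq_integral_Ioc,
    ← intervalIntegral.integral_of_le (by norm_num : (0:ℝ) ≤ 1)]
  have hderiv : ∀ x ∈ uIcc (0:ℝ) 1, HasDerivAt (fun t : ℝ => 2 * t - t ^ 2)
      (2 - 2*x) x := by
    intro x _
    have h := ((hasDerivAt_id x).const_mul (2:ℝ)).sub (hasDerivAt_pow 2 x)
    refine h.congr_deriv ?_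
    push_cast
    ring
  rw [intervalIntegral.integral_eq_sub_of_hasDerivAt hderiv
    ((continuous_const.sub (continuous_const.mul continuous_id)).intervalIntegrable _ _)]
  norm_num

lemma vol_T'_toReal : (volume T').toReal = 1 := by
  have h := setIntegral_const (μ := (volume : Measure (ℝ × ℝ))) (s := T') (1:ℝ)
  rw [int_T'_one, smul_eq_mul, mul_one] at h
  exact h.symm

def psi : E2 ≃ᵐ (ℝ × ℝ) :=
  (MeasurableEquiv.toLp 2 (Fin 2 → ℝ)).symm.trans (MeasurableEquiv.finTwoArrow)

lemma psi_apply (p : E2) : psi p = (p 0, p 1) := rfl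

lemma psi_mp : MeasurePreserving psi volume volume :=
  (volume_preserving_finTwoArrow ℝ).comp (EuclideanSpace.volume_preserving_symm_measurableEquiv_toLp (Fin 2))

lemma Tset_preimage : Tset = psi ⁻¹' T' := rfl

lemma int_Tset : ∫ x in Tset, x 0 ∂(volume : Measure E2) = 1/3 := by
  rw [Tset_preimage, ← int_T'_fst]
  exact psi_mp.setIntegral_preimage_emb psi.measurableEmbedding (fun q => q.1) T'

lemma vol_Tset_toReal : (volume Tset).toReal = 1 := by
  rw [Tset_preimage, psi_mp.measure_preimage measurableSet_T'.nullMeasurableSet]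
  exact vol_T'_toReal

lemma avg_Tset : ⨍ x in Tset, x 0 ∂(volume : Measure E2) = 1/3 := by
  rw [setAverage_eq, int_Tset, measureReal_def, vol_Tset_toReal, smul_eq_mul]
  norm_num

end Area2

end JensenAux

/-- A compact convex set `X ⊆ ℝⁿ` with nonempty interior is of *Jensen type* if for every
convex function `f : X → ℝ` the Lebesgue average of `f` over `X` is at most the average of
`f` over the boundary `∂X` with respect to `(n-1)`-dimensional Hausdorff measure. -/
def IsJensenType {n : ℕ} (X : Set (EuclideanSpace ℝ (Fin n))) : Prop :=
  ∀ f : EuclideanSpace ℝ (Fin n) → ℝ, ConvexOn ℝ X f →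
    ⨍ x in X, f x ≤ ⨍ x in frontier X, f x ∂(μH[(n : ℝ) - 1])

/-- The 45–45–90 triangle with vertices `(0,-1)`, `(0,1)`, `(1,0)` is not of Jensen type:
for the convex function `f (x, y) = x`, the average over the triangle is `1/3`, the average
over its boundary is `1 - √2/2`, and `1/3 > 1 - √2/2`. -/
theorem stmt_0
    (T : Set (EuclideanSpace ℝ (Fin 2)))
    (hT : T = convexHull ℝ {(!₂[0, -1] : EuclideanSpace ℝ (Fin 2)), !₂[0, 1], !₂[1, 0]})
    (f : EuclideanSpace ℝ (Fin 2) → ℝ) (hf : f = fun x => x 0) :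
    (⨍ x in T, f x) = 1 / 3 ∧
    (⨍ x in frontier T, f x ∂(μH[(1 : ℝ)])) = 1 - Real.sqrt 2 / 2 ∧
    (1 : ℝ) / 3 > 1 - Real.sqrt 2 / 2 ∧
    ¬ IsJensenType T := by
  have hTT : T = Tset := hT.trans hull_eq
  subst hf
  have havgT : (⨍ x in T, (fun x : E2 => x 0) x) = 1/3 := by
    rw [hTT]; exact avg_Tset
  have havgB : (⨍ x in frontier T, (fun x : E2 => x 0) x ∂(μH[(1 : ℝ)])) = 1 - Real.sqrt 2 / 2 := by
    rw [hTT, frontier_Tset]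
    have := avg_boundary
    rw [show (1 : ℝ) - sq2 / 2 = 1 - Real.sqrt 2 / 2 from by rw [sq2]] at this
    exact this
  have hineq : (1 : ℝ) / 3 > 1 - Real.sqrt 2 / 2 := by
    have h2 : Real.sqrt 2 * Real.sqrt 2 = 2 := Real.mul_self_sqrt (by norm_num)
    nlinarith [h2, Real.sqrt_nonneg 2]
  refine ⟨havgT, havgB, hineq, ?_⟩
  intro hJ
  have hconv : ConvexOn ℝ T (fun x : E2 => x 0) := by
    refine ⟨hTT ▸ convex_Tset, ?_⟩
    intro x _ y _ a b _ _ _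
    show (a • x + b • y) 0 ≤ a • x 0 + b • y 0
    have : (a • x + b • y) 0 = a * x 0 + b * y 0 := by
      simp [PiLp.add_apply, PiLp.smul_apply]
    rw [this, smul_eq_mul, smul_eq_mul]
  have hle := hJ _ hconv
  rw [show ((2 : ℕ) : ℝ) - 1 = (1 : ℝ) by norm_num] at hle
  rw [havgT, havgB] at hle
  linarith
end

section
/- The unit square [0,1]² is of Jensen-type: for every convex function f : [0,1]² → ℝ, ∫_{[0,1]²} f dx dy ≤ (1/4)(∫_0^1 f(x,0) dx + ∫_0^1 f(x,1) dx + ∫_0^1 f(0,y) dy + ∫_0^1 f(1,y) dy). -/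
open MeasureTheory Set intervalIntegral

private lemma aux_int1d (g : ℝ → ℝ) (hg : ConvexOn ℝ (Set.Icc (0:ℝ) 1) g) (C : ℝ)
    (hC : ∀ x ∈ Set.Icc (0:ℝ) 1, |g x| ≤ C) : IntegrableOn g (Set.Icc (0:ℝ) 1) := by
  have hcont : ContinuousOn g (Set.Ioo 0 1) := by
    have := hg.continuousOn_interior
    rwa [interior_Icc] at this
  have hre : (volume : Measure ℝ).restrict (Set.Icc (0:ℝ) 1)
      = (volume : Measure ℝ).restrict (Set.Ioo (0:ℝ) 1) :=
    (Measure.restrict_congr_set Ioo_ae_eq_Icc).symm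
  have hmeas : AEStronglyMeasurable g ((volume : Measure ℝ).restrict (Set.Icc (0:ℝ) 1)) := by
    rw [hre]
    exact hcont.aestronglyMeasurable measurableSet_Ioo
  refine ⟨hmeas, HasFiniteIntegral.restrict_of_bounded (C := C) ?_ ?_⟩
  · simp [Real.volume_Icc]
  · filter_upwards [ae_restrict_mem measurableSet_Icc] with x hx
    simpa using hC x hx

/-- The unit square `[0,1]²` is of Jensen type: for every convex `f : [0,1]² → ℝ`,
`∫_{[0,1]²} f ≤ (1/4)(∫_0^1 f(x,0) dx + ∫_0^1 f(x,1) dx + ∫_0^1 f(0,y) dy + ∫_0^1 f(1,y) dy)`. -/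
theorem stmt_3 (f : ℝ × ℝ → ℝ)
    (hf : ConvexOn ℝ (Set.Icc (0 : ℝ) 1 ×ˢ Set.Icc (0 : ℝ) 1) f) :
    ∫ p in Set.Icc (0 : ℝ) 1 ×ˢ Set.Icc (0 : ℝ) 1, f p ≤
      (1 / 4) * ((∫ x in (0 : ℝ)..1, f (x, 0)) + (∫ x in (0 : ℝ)..1, f (x, 1)) +
        (∫ y in (0 : ℝ)..1, f (0, y)) + (∫ y in (0 : ℝ)..1, f (1, y))) := by
  set I : Set ℝ := Set.Icc 0 1 with hIdef
  set S : Set (ℝ × ℝ) := I ×ˢ I with hSdef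
  have h01 : (0:ℝ) ∈ I := by simp [hIdef]
  have h11 : (1:ℝ) ∈ I := by simp [hIdef]
  -- segment inequality
  have seg : ∀ p ∈ S, ∀ q ∈ S, ∀ t : ℝ, 0 ≤ t → t ≤ 1 →
      f ((1-t) • p + t • q) ≤ (1-t) * f p + t * f q := by
    intro p hp q hq t ht0 ht1
    have := hf.2 hp hq (by linarith : (0:ℝ) ≤ 1 - t) ht0 (by ring)
    simpa [smul_eq_mul] using this
  have hvert : ∀ x ∈ I, ∀ y ∈ I, f (x, y) ≤ (1-y) * f (x, 0) + y * f (x, 1) := by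
    intro x hx y hy
    have h := seg (x,0) ⟨hx, h01⟩ (x,1) ⟨hx, h11⟩ y hy.1 hy.2
    have e : (1-y) • ((x:ℝ), (0:ℝ)) + y • ((x:ℝ), (1:ℝ)) = (x, y) := by
      simp [Prod.ext_iff, smul_eq_mul]; ring
    rwa [e] at h
  have hhor : ∀ x ∈ I, ∀ y ∈ I, f (x, y) ≤ (1-x) * f (0, y) + x * f (1, y) := by
    intro x hx y hy
    have h := seg (0,y) ⟨h01, hy⟩ (1,y) ⟨h11, hy⟩ x hx.1 hx.2
    have e : (1-x) • ((0:ℝ), (y:ℝ)) + x • ((1:ℝ), (y:ℝ)) = (x, y) := by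
      simp [Prod.ext_iff, smul_eq_mul]; ring
    rwa [e] at h
  -- upper bound by corner max
  set M : ℝ := max (max (f (0,0)) (f (1,0))) (max (f (0,1)) (f (1,1))) with hMdef
  have hub : ∀ p ∈ S, f p ≤ M := by
    rintro ⟨x, y⟩ ⟨hx, hy⟩
    have h1 := hvert x hx y hy
    have h2 := hhor x hx 0 h01
    have h3 := hhor x hx 1 h11
    have m1 : f (0,0) ≤ M := le_max_of_le_left (le_max_left _ _)
    have m2 : f (1,0) ≤ M := le_max_of_le_left (le_max_right _ _)
    have m3 : f (0,1) ≤ M := le_max_of_le_right (le_max_left _ _)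
    have m4 : f (1,1) ≤ M := le_max_of_le_right (le_max_right _ _)
    have hx0 := hx.1; have hx1 := hx.2; have hy0 := hy.1; have hy1 := hy.2
    have b2 : f (x, 0) ≤ M := by nlinarith
    have b3 : f (x, 1) ≤ M := by nlinarith
    nlinarith
  -- lower bound
  have hlb : ∀ p ∈ S, 2 * f (1/2, 1/2) - M ≤ f p := by
    rintro ⟨x, y⟩ hp
    obtain ⟨hx, hy⟩ := hp
    have hx' := Set.mem_Icc.1 hx
    have hy' := Set.mem_Icc.1 hy
    simp only [Prod.fst, Prod.snd] at hx' hy'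
    have hq : ((1-x, 1-y) : ℝ × ℝ) ∈ S := by
      refine ⟨Set.mem_Icc.2 ⟨?_, ?_⟩, Set.mem_Icc.2 ⟨?_, ?_⟩⟩ <;>
        simp only [Prod.fst, Prod.snd] <;> linarith [hx'.1, hx'.2, hy'.1, hy'.2]
    have h := seg (x,y) ⟨hx, hy⟩ (1-x, 1-y) hq (1/2) (by norm_num) (by norm_num)
    have e : (1-(1:ℝ)/2) • ((x:ℝ), (y:ℝ)) + (1/2:ℝ) • ((1-x:ℝ), (1-y:ℝ))
        = ((1:ℝ)/2, (1:ℝ)/2) := by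
      simp [Prod.ext_iff, smul_eq_mul]; constructor <;> ring
    rw [e] at h
    have := hub (1-x, 1-y) hq
    linarith
  set C : ℝ := max M (M - 2 * f (1/2, 1/2)) with hCdef
  have habs : ∀ p ∈ S, |f p| ≤ C := by
    intro p hp
    rw [abs_le]
    constructor
    · have := hlb p hp
      have : -(M - 2 * f (1/2,1/2)) ≤ f p := by linarith
      exact le_trans (neg_le_neg (le_max_right _ _)) this
    · exact (hub p hp).trans (le_max_left _ _)
  -- sections are convex
  have hsecv : ∀ x ∈ I, ConvexOn ℝ I (fun y => f (x, y)) := by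
    intro x hx
    refine ⟨convex_Icc 0 1, fun y1 hy1 y2 hy2 a b ha hb hab => ?_⟩
    have h := hf.2 (show ((x, y1) : ℝ × ℝ) ∈ S from ⟨hx, hy1⟩) (show ((x, y2) : ℝ × ℝ) ∈ S from ⟨hx, hy2⟩) ha hb hab
    have e : a • ((x:ℝ), (y1:ℝ)) + b • ((x:ℝ), (y2:ℝ)) = (x, a • y1 + b • y2) := by
      simp [Prod.ext_iff, smul_eq_mul]
      linear_combination x * hab
    rwa [e] at h
  have hsech : ∀ y ∈ I, ConvexOn ℝ I (fun x => f (x, y)) := by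
    intro y hy
    refine ⟨convex_Icc 0 1, fun x1 hx1 x2 hx2 a b ha hb hab => ?_⟩
    have h := hf.2 (show ((x1, y) : ℝ × ℝ) ∈ S from ⟨hx1, hy⟩) (show ((x2, y) : ℝ × ℝ) ∈ S from ⟨hx2, hy⟩) ha hb hab
    have e : a • ((x1:ℝ), (y:ℝ)) + b • ((x2:ℝ), (y:ℝ)) = (a • x1 + b • x2, y) := by
      simp [Prod.ext_iff, smul_eq_mul]
      linear_combination y * hab
    rwa [e] at h
  -- integrability of f on S
  have hIm : MeasurableSet I := measurableSet_Icc
  have hnull : volume (S \ (Set.Ioo (0:ℝ) 1 ×ˢ Set.Ioo (0:ℝ) 1)) = 0 := by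
    have hsub : S \ (Set.Ioo (0:ℝ) 1 ×ˢ Set.Ioo (0:ℝ) 1) ⊆
        ((I \ Set.Ioo 0 1) ×ˢ (Set.univ : Set ℝ)) ∪ ((Set.univ : Set ℝ) ×ˢ (I \ Set.Ioo 0 1)) := by
      rintro ⟨a, b⟩ ⟨⟨ha, hb⟩, hn⟩
      by_cases h : a ∈ Set.Ioo (0:ℝ) 1
      · exact Or.inr ⟨trivial, hb, fun hb' => hn ⟨h, hb'⟩⟩
      · exact Or.inl ⟨⟨ha, h⟩, trivial⟩
    refine measure_mono_null hsub (measure_union_null ?_ ?_) <;>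
      · rw [Measure.volume_eq_prod, Measure.prod_prod]
        have : volume (I \ Set.Ioo (0:ℝ) 1) = 0 := by
          rw [hIdef, Icc_diff_Ioo_same zero_le_one]
          exact ((Set.finite_singleton (1:ℝ)).insert 0).measure_zero volume
        simp [this]
  have haeS : S =ᵐ[volume] (Set.Ioo (0:ℝ) 1 ×ˢ Set.Ioo (0:ℝ) 1) := by
    rw [Filter.eventuallyEq_set]
    have h2 : volume ((Set.Ioo (0:ℝ) 1 ×ˢ Set.Ioo (0:ℝ) 1) \ S) = 0 := by
      have : (Set.Ioo (0:ℝ) 1 ×ˢ Set.Ioo (0:ℝ) 1) \ S = ∅ := by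
        rw [Set.diff_eq_empty]
        exact Set.prod_mono Ioo_subset_Icc_self Ioo_subset_Icc_self
      simp [this]
    have := (measure_union_null hnull h2)
    rw [← Set.symmDiff_def] at this
    have := (MeasureTheory.ae_eq_set (μ := volume) (s := S)
      (t := Set.Ioo (0:ℝ) 1 ×ˢ Set.Ioo (0:ℝ) 1)).2 ⟨hnull, h2⟩
    rwa [Filter.eventuallyEq_set] at this
  have hcont2 : ContinuousOn f (Set.Ioo (0:ℝ) 1 ×ˢ Set.Ioo (0:ℝ) 1) := by
    have := hf.continuousOn_interior
    rwa [interior_prod_eq, interior_Icc] at this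
  have hreS : (volume : Measure (ℝ × ℝ)).restrict S
      = (volume : Measure (ℝ × ℝ)).restrict (Set.Ioo (0:ℝ) 1 ×ˢ Set.Ioo (0:ℝ) 1) :=
    Measure.restrict_congr_set haeS
  have hmeasf : AEStronglyMeasurable f ((volume : Measure (ℝ × ℝ)).restrict S) := by
    rw [hreS]
    exact hcont2.aestronglyMeasurable (measurableSet_Ioo.prod measurableSet_Ioo)
  have hSfin : volume S ≠ ⊤ := by
    rw [hSdef, hIdef, Measure.volume_eq_prod, Measure.prod_prod, Real.volume_Icc]
    norm_num
  have hintf : IntegrableOn f S := by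
    refine ⟨hmeasf, HasFiniteIntegral.restrict_of_bounded (C := C) hSfin.lt_top ?_⟩
    filter_upwards [ae_restrict_mem (hIm.prod hIm)] with p hp
    simpa using habs p hp
  -- Fubini
  have hintf' : Integrable f (((volume : Measure ℝ).restrict I).prod
      ((volume : Measure ℝ).restrict I)) := by
    rw [Measure.prod_restrict]
    rw [Measure.volume_eq_prod] at hintf
    exact hintf
  have hfub : ∫ p in S, f p = ∫ x in I, ∫ y in I, f (x, y) := by
    rw [Measure.volume_eq_prod]
    exact setIntegral_prod f (by rw [Measure.volume_eq_prod] at hintf; exact hintf)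
  have hswap : ∫ x in I, ∫ y in I, f (x, y) = ∫ y in I, ∫ x in I, f (x, y) := by
    apply integral_integral_swap (f := fun x y => f (x, y))
    have : Function.uncurry (fun x y => f (x, y)) = f := by
      funext p; simp [Function.uncurry]
    rw [this]
    exact hintf'
  -- integrability of the boundary sections
  have hintA : IntegrableOn (fun x => f (x, 0)) I :=
    aux_int1d _ (hsech 0 h01) C (fun x hx => habs (x, 0) ⟨hx, h01⟩)
  have hintB : IntegrableOn (fun x => f (x, 1)) I :=
    aux_int1d _ (hsech 1 h11) C (fun x hx => habs (x, 1) ⟨hx, h11⟩)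
  have hintCc : IntegrableOn (fun y => f (0, y)) I :=
    aux_int1d _ (hsecv 0 h01) C (fun y hy => habs (0, y) ⟨h01, hy⟩)
  have hintD : IntegrableOn (fun y => f (1, y)) I :=
    aux_int1d _ (hsecv 1 h11) C (fun y hy => habs (1, y) ⟨h11, hy⟩)
  -- inner estimates
  have haffint : ∀ a b : ℝ, ∫ y in I, ((1-y) * a + y * b) = (1/2) * a + (1/2) * b := by
    intro a b
    have h1 : ∫ y in I, ((1-y) * a + y * b)
        = ∫ y in (0:ℝ)..1, ((1-y) * a + y * b) := by
      rw [intervalIntegral.integral_of_le zero_le_one, hIdef,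
        MeasureTheory.integral_Icc_eq_integral_Ioc]
    rw [h1]
    have : (fun y : ℝ => (1-y) * a + y * b) = fun y : ℝ => a + (b - a) * y := by
      funext y; ring
    rw [this, intervalIntegral.integral_add (intervalIntegrable_const)
      (by apply Continuous.intervalIntegrable; fun_prop),
      intervalIntegral.integral_const, intervalIntegral.integral_const_mul,
      integral_id]
    norm_num
    ring
  have hin1 : ∀ x ∈ I, ∫ y in I, f (x, y) ≤ (1/2) * f (x, 0) + (1/2) * f (x, 1) := by
    intro x hx
    have hint : IntegrableOn (fun y => f (x, y)) I :=
      aux_int1d _ (hsecv x hx) C (fun y hy => habs (x, y) ⟨hx, hy⟩)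
    have hintaff : IntegrableOn (fun y : ℝ => (1-y) * f (x,0) + y * f (x,1)) I :=
      (Continuous.integrableOn_Icc (by fun_prop))
    have hle := setIntegral_mono_on hint hintaff hIm (fun y hy => hvert x hx y hy)
    calc ∫ y in I, f (x, y) ≤ ∫ y in I, ((1-y) * f (x,0) + y * f (x,1)) := hle
    _ = (1/2) * f (x, 0) + (1/2) * f (x, 1) := haffint _ _
  have hin2 : ∀ y ∈ I, ∫ x in I, f (x, y) ≤ (1/2) * f (0, y) + (1/2) * f (1, y) := by
    intro y hy
    have hint : IntegrableOn (fun x => f (x, y)) I :=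
      aux_int1d _ (hsech y hy) C (fun x hx => habs (x, y) ⟨hx, hy⟩)
    have hintaff : IntegrableOn (fun x : ℝ => (1-x) * f (0,y) + x * f (1,y)) I :=
      (Continuous.integrableOn_Icc (by fun_prop))
    have hle := setIntegral_mono_on hint hintaff hIm (fun x hx => hhor x hx y hy)
    calc ∫ x in I, f (x, y) ≤ ∫ x in I, ((1-x) * f (0,y) + x * f (1,y)) := hle
    _ = (1/2) * f (0, y) + (1/2) * f (1, y) := haffint _ _
  -- integrability of inner integrals
  have hi1 : Integrable (fun x => ∫ y in I, f (x, y)) ((volume : Measure ℝ).restrict I) := by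
    have := hintf'.integral_prod_left
    simpa using this
  have hi2 : Integrable (fun y => ∫ x in I, f (x, y)) ((volume : Measure ℝ).restrict I) :=
    hintf'.integral_prod_right
  -- chain 1
  have hchain1 : ∫ p in S, f p ≤ (1/2) * (∫ x in I, f (x, 0)) + (1/2) * ∫ x in I, f (x, 1) := by
    rw [hfub]
    calc ∫ x in I, ∫ y in I, f (x, y)
        ≤ ∫ x in I, ((1/2) * f (x, 0) + (1/2) * f (x, 1)) := by
          refine setIntegral_mono_on hi1 ?_ hIm hin1
          exact (hintA.const_mul _).add (hintB.const_mul _)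
      _ = (1/2) * (∫ x in I, f (x, 0)) + (1/2) * ∫ x in I, f (x, 1) := by
          rw [integral_add (hintA.const_mul _) (hintB.const_mul _),
            MeasureTheory.integral_const_mul, MeasureTheory.integral_const_mul]
  have hchain2 : ∫ p in S, f p ≤ (1/2) * (∫ y in I, f (0, y)) + (1/2) * ∫ y in I, f (1, y) := by
    rw [hfub, hswap]
    calc ∫ y in I, ∫ x in I, f (x, y)
        ≤ ∫ y in I, ((1/2) * f (0, y) + (1/2) * f (1, y)) := by
          refine setIntegral_mono_on hi2 ?_ hIm hin2
          exact (hintCc.const_mul _).add (hintD.const_mul _)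
      _ = (1/2) * (∫ y in I, f (0, y)) + (1/2) * ∫ y in I, f (1, y) := by
          rw [integral_add (hintCc.const_mul _) (hintD.const_mul _),
            MeasureTheory.integral_const_mul, MeasureTheory.integral_const_mul]
  -- convert set integrals to interval integrals
  have hconv : ∀ g : ℝ → ℝ, ∫ x in I, g x = ∫ x in (0:ℝ)..1, g x := by
    intro g
    rw [intervalIntegral.integral_of_le zero_le_one, hIdef,
      MeasureTheory.integral_Icc_eq_integral_Ioc]
  rw [hconv (fun x => f (x, 0)), hconv (fun x => f (x, 1))] at hchain1
  rw [hconv (fun y => f (0, y)), hconv (fun y => f (1, y))] at hchain2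
  linarith
end

section
/- For a box W = ∏_{i=1}^n [a_i,b_i], a convex function f : W → ℝ, and each pair of opposite facets S_i (where x_i = a_i) and S_i* (where x_i = b_i), one has 2|S_i| · ⨍_W f ≤ ∫_{S_i} f + ∫_{S_i*} f, where |S_i| is the (n-1)-dimensional measure of S_i and ⨍_W f is the Lebesgue average of f over W. -/
open MeasureTheory Set
open scoped ENNReal NNReal

variable {m : ℕ}

noncomputable def EuclideanSpace.measurableEquiv (ι : Type*) [Fintype ι] :
    EuclideanSpace ℝ ι ≃ᵐ (ι → ℝ) :=
  (MeasurableEquiv.toLp 2 (ι → ℝ)).symm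

lemma EuclideanSpace.coe_measurableEquiv (ι : Type*) [Fintype ι] :
    ⇑(EuclideanSpace.measurableEquiv ι) = WithLp.ofLp := rfl

lemma EuclideanSpace.coe_measurableEquiv_symm (ι : Type*) [Fintype ι] :
    ⇑(EuclideanSpace.measurableEquiv ι).symm = WithLp.toLp 2 := rfl

lemma EuclideanSpace.volume_preserving_measurableEquiv (ι : Type*) [Fintype ι] :
    MeasurePreserving (EuclideanSpace.measurableEquiv ι) volume volume :=
  EuclideanSpace.volume_preserving_symm_measurableEquiv_toLp ι

def hhBox (a b : Fin m → ℝ) : Set (EuclideanSpace ℝ (Fin m)) :=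
  {x | ∀ j, x j ∈ Icc (a j) (b j)}

lemma hhBox_eq_pi (a b : Fin m → ℝ) :
    hhBox a b = WithLp.ofLp ⁻¹' Set.pi univ fun j => Icc (a j) (b j) := by
  ext x
  exact ⟨fun h j _ => h j, fun h j => h j (mem_univ j)⟩

lemma isClosed_hhBox (a b : Fin m → ℝ) : IsClosed (hhBox a b) := by
  have h : hhBox a b = ⋂ j, (fun x : EuclideanSpace ℝ (Fin m) => x j) ⁻¹' Icc (a j) (b j) := by
    ext x; simp [hhBox]
  rw [h]
  exact isClosed_iInter fun j => isClosed_Icc.preimage (EuclideanSpace.proj (𝕜 := ℝ) j).continuous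

lemma isCompact_hhBox (a b : Fin m → ℝ) : IsCompact (hhBox a b) := by
  have h := isCompact_univ_pi (fun j => isCompact_Icc (a := a j) (b := b j))
  set e := (PiLp.continuousLinearEquiv 2 ℝ (fun _ : Fin m => ℝ)).toHomeomorph with he
  have hpre : hhBox a b = e ⁻¹' (Set.pi univ fun j => Icc (a j) (b j)) := by
    ext x
    simp only [he, Set.mem_preimage, ContinuousLinearEquiv.coe_toHomeomorph,
      PiLp.coe_continuousLinearEquiv]
    exact ⟨fun h j _ => h j, fun h j => h j (mem_univ j)⟩
  rw [hpre]
  exact e.isCompact_preimage.mpr h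

lemma hh_exists_bound {a b : Fin m → ℝ} (hab : ∀ j, a j ≤ b j)
    {f : EuclideanSpace ℝ (Fin m) → ℝ} (hf : ConvexOn ℝ (hhBox a b) f) :
    ∃ M : ℝ, ∀ x ∈ hhBox a b, |f x| ≤ M := by
  classical
  set C : Set (EuclideanSpace ℝ (Fin m)) := WithLp.ofLp ⁻¹' Set.pi univ fun j => ({a j, b j} : Set ℝ) with hC
  have hCfin : C.Finite := Set.Finite.preimage (WithLp.ofLp_injective 2).injOn
    (Set.Finite.pi fun j => (Set.finite_singleton (b j)).insert (a j))
  have hCsub : C ⊆ hhBox a b := by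
    intro x hx j
    rcases hx j (mem_univ j) with h | h
    · rw [h]; exact ⟨le_refl _, hab j⟩
    · rw [mem_singleton_iff] at h; rw [h]; exact ⟨hab j, le_refl _⟩
  have hhull : convexHull ℝ C = hhBox a b := by
    have hCimg : C = (WithLp.linearEquiv 2 ℝ (Fin m → ℝ)).symm.toLinearMap ''
        (Set.pi univ fun j => ({a j, b j} : Set ℝ)) := by
      ext x; constructor
      · intro hx; exact ⟨WithLp.ofLp x, hx, rfl⟩
      · rintro ⟨y, hy, rfl⟩; exact hy
    have h1 : convexHull ℝ (Set.pi univ fun j => ({a j, b j} : Set ℝ)) =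
        Set.pi univ fun j => convexHull ℝ ({a j, b j} : Set ℝ) :=
      convexHull_pi _ _
    have h2 : ∀ j, convexHull ℝ ({a j, b j} : Set ℝ) = Icc (a j) (b j) := fun j => by
      rw [convexHull_pair, segment_eq_Icc (hab j)]
    rw [hCimg, ← LinearMap.image_convexHull, h1, hhBox_eq_pi]
    simp only [h2]
    ext x; constructor
    · rintro ⟨y, hy, rfl⟩; exact hy
    · intro hx; exact ⟨WithLp.ofLp x, hx, rfl⟩
  have hbdd : BddAbove (f '' C) := (hCfin.image f).bddAbove
  set M := sSup (f '' C) with hM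
  have hub : ∀ x ∈ hhBox a b, f x ≤ M := by
    intro x hx
    obtain ⟨y, hy, hxy⟩ := hf.exists_ge_of_mem_convexHull hCsub (hhull ▸ hx)
    exact hxy.trans (le_csSup hbdd ⟨y, hy, rfl⟩)
  set c : EuclideanSpace ℝ (Fin m) := WithLp.toLp 2 fun j => (a j + b j) / 2 with hc
  have hcmem : c ∈ hhBox a b := by
    intro j
    constructor
    · show a j ≤ (a j + b j) / 2; linarith [hab j]
    · show (a j + b j) / 2 ≤ b j; linarith [hab j]
  refine ⟨max M (M - 2 * f c), fun x hx => abs_le.2 ⟨?_, (hub x hx).trans (le_max_left _ _)⟩⟩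
  · -- lower bound
    set r : EuclideanSpace ℝ (Fin m) := WithLp.toLp 2 fun j => a j + b j - x j with hr
    have hrmem : r ∈ hhBox a b := by
      intro j
      have := hx j
      constructor
      · show a j ≤ a j + b j - x j; have := (hx j).2; linarith
      · show a j + b j - x j ≤ b j; have := (hx j).1; linarith
    have hmid : c = (1/2 : ℝ) • x + (1/2 : ℝ) • r := by
      ext j
      show (a j + b j) / 2 = ((1/2 : ℝ) • x + (1/2 : ℝ) • r) j
      simp [PiLp.add_apply, PiLp.smul_apply, hr, smul_eq_mul]
      ring
    have h2 := hf.2 hx hrmem (by norm_num : (0:ℝ) ≤ 1/2) (by norm_num : (0:ℝ) ≤ 1/2) (by norm_num)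
    rw [← hmid] at h2
    have h3 : f r ≤ M := hub r hrmem
    have : f c ≤ (1/2) * f x + (1/2) * M := by
      simp only [smul_eq_mul] at h2; linarith
    have h4 : 2 * f c - M ≤ f x := by linarith
    have : -(M - 2 * f c) ≤ f x := by linarith
    exact le_trans (neg_le_neg (le_max_right M (M - 2 * f c))) this


lemma hh_aesm {a b : Fin m → ℝ}
    {f : EuclideanSpace ℝ (Fin m) → ℝ} (hf : ConvexOn ℝ (hhBox a b) f) :
    AEStronglyMeasurable f (volume.restrict (hhBox a b)) := by
  have hconv : Convex ℝ (hhBox a b) := hf.1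
  have hfront : volume (frontier (hhBox a b)) = 0 := hconv.addHaar_frontier volume
  have hdiff : volume (hhBox a b \ interior (hhBox a b)) = 0 :=
    measure_mono_null (diff_subset_diff_left subset_closure) hfront
  have hae : interior (hhBox a b) =ᵐ[volume] hhBox a b := by
    rw [ae_eq_set]
    constructor
    · rw [diff_eq_empty.mpr interior_subset]; exact measure_empty
    · exact hdiff
  have hcont : ContinuousOn f (interior (hhBox a b)) :=
    (hf.subset interior_subset hconv.interior).continuousOn isOpen_interior
  rw [← Measure.restrict_congr_set hae]
  exact (hcont.aemeasurable isOpen_interior.measurableSet).aestronglyMeasurable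

lemma hh_integrableOn {a b : Fin m → ℝ} (hab : ∀ j, a j ≤ b j)
    {f : EuclideanSpace ℝ (Fin m) → ℝ} (hf : ConvexOn ℝ (hhBox a b) f) :
    IntegrableOn f (hhBox a b) volume := by
  obtain ⟨M, hM⟩ := hh_exists_bound hab hf
  have hmeas : MeasurableSet (hhBox a b) := (isClosed_hhBox a b).measurableSet
  have hfin : volume (hhBox a b) < ⊤ := (isCompact_hhBox a b).measure_lt_top
  refine Integrable.mono' (g := fun _ => M) (integrableOn_const hfin.ne) (hh_aesm hf) ?_
  refine (ae_restrict_iff' hmeas).mpr (ae_of_all _ fun x hx => ?_)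
  rw [Real.norm_eq_abs]; exact hM x hx


lemma hhBox_preimage (a b : Fin m → ℝ) :
    hhBox a b = (EuclideanSpace.measurableEquiv (Fin m)) ⁻¹'
      (Set.pi univ fun j => Icc (a j) (b j)) := by
  ext x
  simp only [Set.mem_preimage, EuclideanSpace.coe_measurableEquiv]
  exact ⟨fun h j _ => h j, fun h j => h j (mem_univ j)⟩

lemma hh_volume_box (a b : Fin m → ℝ) :
    volume (hhBox a b) = ∏ j, ENNReal.ofReal (b j - a j) := by
  have hP : MeasurePreserving (EuclideanSpace.measurableEquiv (Fin m)) volume volume :=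
    EuclideanSpace.volume_preserving_measurableEquiv (Fin m)
  rw [hhBox_preimage, hP.measure_preimage
    (MeasurableSet.univ_pi fun j => measurableSet_Icc).nullMeasurableSet]
  rw [volume_pi_pi]
  simp [Real.volume_Icc]

lemma hh_hausdorff_pi : (μH[(m:ℝ)] : Measure (Fin m → ℝ)) = volume := by
  have := MeasureTheory.hausdorffMeasure_pi_real (ι := Fin m)
  simpa using this

lemma hh_hausdorff_eq_smul (m : ℕ) : ∃ c : ℝ≥0, 0 < c ∧
    (μH[(m:ℝ)] : Measure (EuclideanSpace ℝ (Fin m))) = c • volume := by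
  have hd : (0:ℝ) ≤ (m:ℝ) := Nat.cast_nonneg m
  have hL := PiLp.lipschitzWith_ofLp 2 (fun _ : Fin m => ℝ)
  have hA := PiLp.antilipschitzWith_ofLp 2 (fun _ : Fin m => ℝ)
  have hinv : Measure.IsAddLeftInvariant (μH[(m:ℝ)] : Measure (EuclideanSpace ℝ (Fin m))) := by
    constructor
    intro g
    have h := (AffineIsometryEquiv.constVAdd ℝ (EuclideanSpace ℝ (Fin m)) g)
      |>.toIsometryEquiv.map_hausdorffMeasure (m:ℝ)
    simpa [AffineIsometryEquiv.coe_constVAdd] using h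
  have hfin : IsFiniteMeasureOnCompacts
      (μH[(m:ℝ)] : Measure (EuclideanSpace ℝ (Fin m))) := by
    constructor
    intro K hK
    have h1 := hA.le_hausdorffMeasure_image hd K
    have h2 : IsCompact ((WithLp.equiv 2 (Fin m → ℝ)) '' K) := hK.image hL.continuous
    have h3 : μH[(m:ℝ)] ((WithLp.equiv 2 (Fin m → ℝ)) '' K) < ⊤ := by
      rw [hh_hausdorff_pi]
      exact h2.measure_lt_top
    calc μH[(m:ℝ)] K ≤ _ * μH[(m:ℝ)] ((WithLp.equiv 2 (Fin m → ℝ)) '' K) := h1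
    _ < ⊤ := ENNReal.mul_lt_top (by simp [ENNReal.rpow_natCast]) h3
  set c := Measure.addHaarScalarFactor (μH[(m:ℝ)] : Measure (EuclideanSpace ℝ (Fin m))) volume with hc
  have heq := Measure.isAddLeftInvariant_eq_smul
    (μH[(m:ℝ)] : Measure (EuclideanSpace ℝ (Fin m))) volume
  refine ⟨c, ?_, heq⟩
  rcases eq_or_ne c 0 with h0 | hpos
  · exfalso
    -- evaluate on the unit box
    set s := hhBox (fun _ => (0:ℝ)) (fun _ => 1) with hs
    have hub := hL.hausdorffMeasure_image_le hd s
    have himg : (WithLp.equiv 2 (Fin m → ℝ)) '' s = Set.pi univ fun _ => Icc (0:ℝ) 1 := by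
      ext y
      rw [Set.mem_image]
      constructor
      · rintro ⟨x, hx, rfl⟩
        intro j _
        exact hx j
      · intro hy
        exact ⟨(WithLp.equiv 2 (Fin m → ℝ)).symm y, fun j => hy j (mem_univ j), by simp⟩
    have hvol : μH[(m:ℝ)] ((WithLp.equiv 2 (Fin m → ℝ)) '' s) = 1 := by
      rw [hh_hausdorff_pi, himg]
      have : (Set.pi univ fun _ : Fin m => Icc (0:ℝ) 1) = Icc (fun _ => 0) (fun _ => 1) := by
        ext y; simp [Set.mem_pi, Pi.le_def, forall_and]
      rw [this, Real.volume_Icc_pi]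
      simp
    change μH[(m:ℝ)] ((WithLp.equiv 2 (Fin m → ℝ)) '' s) ≤ _ at hub
    rw [hvol] at hub
    have h0' : (c : ℝ≥0) = 0 := h0
    have : (μH[(m:ℝ)] : Measure (EuclideanSpace ℝ (Fin m))) s = 0 := by
      rw [heq, ← hc, h0']
      simp
    rw [this] at hub
    simp at hub
  · exact pos_iff_ne_zero.mpr hpos


lemma hh_one_dim {p q : ℝ} (hpq : p < q) {g : ℝ → ℝ} (hg : ConvexOn ℝ (Icc p q) g)
    (hint : IntegrableOn g (Icc p q)) :
    ∫ t in Icc p q, g t ≤ (q - p) * (g p + g q) / 2 := by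
  have hqp : (0:ℝ) < q - p := by linarith
  set k : ℝ := (g q - g p) / (q - p) with hk
  set L : ℝ → ℝ := fun t => g p + (t - p) * k with hL
  have hle : ∀ t ∈ Icc p q, g t ≤ L t := by
    intro t ht
    set u : ℝ := (t - p) / (q - p) with hu
    have hu0 : 0 ≤ u := div_nonneg (by linarith [ht.1]) hqp.le
    have hu1 : u ≤ 1 := by
      rw [hu, div_le_one hqp]; linarith [ht.2]
    have hcomb := hg.2 (left_mem_Icc.2 hpq.le) (right_mem_Icc.2 hpq.le)
      (by linarith : (0:ℝ) ≤ 1 - u) hu0 (by ring)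
    have harg : (1 - u) • p + u • q = t := by
      simp only [smul_eq_mul, hu]; field_simp; ring
    rw [harg] at hcomb
    refine hcomb.trans (le_of_eq ?_)
    simp only [smul_eq_mul, hL, hk, hu]
    field_simp
    ring
  have hLint : IntegrableOn L (Icc p q) :=
    (continuous_const.add ((continuous_id.sub continuous_const).mul continuous_const)).integrableOn_Icc
  have hmono : ∫ t in Icc p q, g t ≤ ∫ t in Icc p q, L t :=
    setIntegral_mono_on hint hLint measurableSet_Icc hle
  refine hmono.trans (le_of_eq ?_)
  have h1 : ∫ t in Icc p q, L t = ∫ t in p..q, L t := by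
    rw [intervalIntegral.integral_of_le hpq.le, integral_Icc_eq_integral_Ioc]
  have h2 : ∫ t in p..q, L t = g p * (q - p) + k * ((q - p) ^ 2 / 2) := by
    have hid : IntervalIntegrable (fun t : ℝ => (t - p) * k) volume p q :=
      (((continuous_id.sub continuous_const).mul continuous_const)).intervalIntegrable p q
    rw [hL]
    rw [intervalIntegral.integral_add (intervalIntegrable_const) hid]
    rw [intervalIntegral.integral_const]
    have h3 : ∫ t in p..q, (t - p) * k = ((q - p) ^ 2 / 2) * k := by
      have h4 : ∫ t in p..q, (t - p) = (q - p) ^ 2 / 2 := by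
        rw [intervalIntegral.integral_comp_sub_right (fun t => t) p, integral_id]
        ring
      rw [intervalIntegral.integral_mul_const, h4]
    rw [h3]
    ring_nf
  rw [h1, h2, hk]
  field_simp
  ring


variable {m : ℕ}

noncomputable def hhIns (i : Fin (m + 1)) (t : ℝ) (y : EuclideanSpace ℝ (Fin m)) :
    EuclideanSpace ℝ (Fin (m + 1)) :=
  (EuclideanSpace.measurableEquiv (Fin (m+1))).symm
    (i.insertNth t ((EuclideanSpace.measurableEquiv (Fin m)) y))

lemma hhIns_apply (i : Fin (m + 1)) (t : ℝ) (y : EuclideanSpace ℝ (Fin m)) (j : Fin (m + 1)) :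
    hhIns i t y j = Fin.insertNth (α := fun _ => ℝ) i t (fun k => y k) j := by
  simp only [hhIns, EuclideanSpace.coe_measurableEquiv_symm, EuclideanSpace.coe_measurableEquiv]

lemma hhIns_apply_same (i : Fin (m + 1)) (t : ℝ) (y : EuclideanSpace ℝ (Fin m)) :
    hhIns i t y i = t := by rw [hhIns_apply]; simp

lemma hhIns_apply_succAbove (i : Fin (m + 1)) (t : ℝ) (y : EuclideanSpace ℝ (Fin m)) (k : Fin m) :
    hhIns i t y (i.succAbove k) = y k := by rw [hhIns_apply]; simp

lemma hhIns_isometry (i : Fin (m + 1)) (t : ℝ) : Isometry (hhIns i t) := by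
  apply Isometry.of_dist_eq
  intro y z
  rw [EuclideanSpace.dist_eq, EuclideanSpace.dist_eq]
  congr 1
  rw [Fin.sum_univ_succAbove _ i]
  simp [hhIns_apply_same, hhIns_apply_succAbove]

lemma hhIns_combo (i : Fin (m + 1)) (s u t₁ t₂ : ℝ) (y z : EuclideanSpace ℝ (Fin m)) :
    s • hhIns i t₁ y + u • hhIns i t₂ z = hhIns i (s * t₁ + u * t₂) (s • y + u • z) := by
  ext j
  rw [PiLp.add_apply, PiLp.smul_apply, PiLp.smul_apply, hhIns_apply, hhIns_apply, hhIns_apply]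
  have hb := Fin.insertNth_binop (fun (_ : Fin (m+1)) (v w : ℝ) => s * v + u * w) i t₁ t₂
    (fun k => y k) (fun k => z k)
  have h2 := congrFun hb j
  simp only [smul_eq_mul]
  rw [← h2]
  have h3 : (fun j => s * y j + u * z j) = fun k => (s • y + u • z) k := by
    funext k
    rw [PiLp.add_apply, PiLp.smul_apply, PiLp.smul_apply]
    simp [smul_eq_mul]
  rw [h3]

lemma hhIns_mem (i : Fin (m + 1)) (a b : Fin (m+1) → ℝ) (t : ℝ)
    (y : EuclideanSpace ℝ (Fin m)) :
    hhIns i t y ∈ hhBox a b ↔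
      t ∈ Icc (a i) (b i) ∧ y ∈ hhBox (a ∘ i.succAbove) (b ∘ i.succAbove) := by
  constructor
  · intro h
    refine ⟨?_, fun k => ?_⟩
    · have := h i; rwa [hhIns_apply_same] at this
    · have := h (i.succAbove k); rwa [hhIns_apply_succAbove] at this
  · rintro ⟨h1, h2⟩ j
    refine Fin.succAboveCases i ?_ ?_ j
    · rwa [hhIns_apply_same]
    · intro k; rw [hhIns_apply_succAbove]; exact h2 k

lemma hh_facet_image (i : Fin (m + 1)) (a b : Fin (m+1) → ℝ) (t : ℝ) (ht : t ∈ Icc (a i) (b i)) :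
    {x ∈ hhBox a b | x i = t} = hhIns i t '' hhBox (a ∘ i.succAbove) (b ∘ i.succAbove) := by
  ext x
  constructor
  · rintro ⟨hx, hxi⟩
    refine ⟨(EuclideanSpace.measurableEquiv (Fin m)).symm (i.removeNth fun j => x j),
      fun k => ?_, ?_⟩
    · exact hx (i.succAbove k)
    · have : x = hhIns i (x i) ((EuclideanSpace.measurableEquiv (Fin m)).symm
        (i.removeNth fun j => x j)) := by
        ext j
        rw [hhIns_apply]
        exact (congrFun (Fin.insertNth_self_removeNth i fun j => x j) j).symm
      rw [← hxi]; exact this.symm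
  · rintro ⟨y, hy, rfl⟩
    exact ⟨(hhIns_mem i a b t y).2 ⟨ht, hy⟩, hhIns_apply_same i t y⟩

lemma hh_facet_preimage (i : Fin (m + 1)) (a b : Fin (m+1) → ℝ) (t : ℝ) (ht : t ∈ Icc (a i) (b i)) :
    hhIns i t ⁻¹' {x ∈ hhBox a b | x i = t} = hhBox (a ∘ i.succAbove) (b ∘ i.succAbove) := by
  ext y
  simp only [Set.mem_preimage, mem_setOf_eq, hhIns_apply_same, and_true]
  rw [hhIns_mem]
  exact ⟨fun h => h.2, fun h => ⟨ht, h⟩⟩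

noncomputable def hhG (i : Fin (m+1)) (a b : Fin (m+1) → ℝ)
    (f : EuclideanSpace ℝ (Fin (m+1)) → ℝ) (t : ℝ) : ℝ :=
  ∫ y in hhBox (a ∘ i.succAbove) (b ∘ i.succAbove), f (hhIns i t y)

lemma hh_facet_integral (i : Fin (m+1)) (a b : Fin (m+1) → ℝ)
    (f : EuclideanSpace ℝ (Fin (m+1)) → ℝ) (t : ℝ) (ht : t ∈ Icc (a i) (b i))
    (c : ℝ≥0) (hcμ : (μH[(m:ℝ)] : Measure (EuclideanSpace ℝ (Fin m))) = c • volume) :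
    (∫ x in {x ∈ hhBox a b | x i = t}, f x
        ∂(μH[(m:ℝ)] : Measure (EuclideanSpace ℝ (Fin (m+1))))) =
      (c : ℝ≥0∞).toReal * hhG i a b f t := by
  have hd : (0:ℝ) ≤ (m:ℝ) := Nat.cast_nonneg m
  have hiso := hhIns_isometry i t
  have hemb : MeasurableEmbedding (hhIns i t) := hiso.isClosedEmbedding.measurableEmbedding
  have hmap : Measure.map (hhIns i t) μH[(m:ℝ)] = μH[(m:ℝ)].restrict (range (hhIns i t)) :=
    hiso.map_hausdorffMeasure (Or.inl hd)
  have hSeq := hh_facet_image i a b t ht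
  have hsub : {x ∈ hhBox a b | x i = t} ⊆ range (hhIns i t) := by
    rw [hSeq]; exact image_subset_range _ _
  have h1 : (∫ x in {x ∈ hhBox a b | x i = t}, f x
      ∂(μH[(m:ℝ)] : Measure (EuclideanSpace ℝ (Fin (m+1))))) =
      ∫ x in {x ∈ hhBox a b | x i = t}, f x ∂(Measure.map (hhIns i t) μH[(m:ℝ)]) := by
    rw [hmap, Measure.restrict_restrict_of_subset hsub]
  rw [h1, hemb.setIntegral_map, hh_facet_preimage i a b t ht, hcμ]
  have : ((c : ℝ≥0) • (volume : Measure (EuclideanSpace ℝ (Fin m)))) =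
      ((c : ℝ≥0∞) • (volume : Measure (EuclideanSpace ℝ (Fin m)))) := rfl
  rw [this, Measure.restrict_smul, integral_smul_measure]
  rfl

lemma hh_facet_measure (i : Fin (m+1)) (a b : Fin (m+1) → ℝ) (t : ℝ) (ht : t ∈ Icc (a i) (b i))
    (c : ℝ≥0) (hcμ : (μH[(m:ℝ)] : Measure (EuclideanSpace ℝ (Fin m))) = c • volume) :
    (μH[(m:ℝ)] : Measure (EuclideanSpace ℝ (Fin (m+1)))) {x ∈ hhBox a b | x i = t} =
      c • volume (hhBox (a ∘ i.succAbove) (b ∘ i.succAbove)) := by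
  have hd : (0:ℝ) ≤ (m:ℝ) := Nat.cast_nonneg m
  rw [hh_facet_image i a b t ht, (hhIns_isometry i t).hausdorffMeasure_image (Or.inl hd), hcμ]
  rfl


lemma convex_hhBox (a b : Fin m → ℝ) : Convex ℝ (hhBox a b) := by
  rw [hhBox_eq_pi]
  exact (convex_pi fun j _ => convex_Icc _ _).linear_preimage (WithLp.linearEquiv 2 ℝ (Fin m → ℝ)).toLinearMap

lemma hh_convexOn_ins (i : Fin (m+1)) (a b : Fin (m+1) → ℝ)
    {f : EuclideanSpace ℝ (Fin (m+1)) → ℝ} (hf : ConvexOn ℝ (hhBox a b) f)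
    (t : ℝ) (ht : t ∈ Icc (a i) (b i)) :
    ConvexOn ℝ (hhBox (a ∘ i.succAbove) (b ∘ i.succAbove)) (fun y => f (hhIns i t y)) := by
  refine ⟨convex_hhBox _ _, ?_⟩
  intro y hy z hz s u hs hu hsu
  have hst : s * t + u * t = t := by rw [← add_mul, hsu, one_mul]
  have harg : hhIns i t (s • y + u • z) = s • hhIns i t y + u • hhIns i t z := by
    rw [hhIns_combo, hst]
  have h2 := hf.2 ((hhIns_mem i a b t y).2 ⟨ht, hy⟩) ((hhIns_mem i a b t z).2 ⟨ht, hz⟩) hs hu hsu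
  calc f (hhIns i t (s • y + u • z)) = f (s • hhIns i t y + u • hhIns i t z) := by rw [harg]
  _ ≤ s • f (hhIns i t y) + u • f (hhIns i t z) := h2


lemma hhIns_def {m : ℕ} (i : Fin (m + 1)) (t : ℝ) (y : EuclideanSpace ℝ (Fin m)) :
  hhIns i t y = (EuclideanSpace.measurableEquiv (Fin (m+1))).symm
    (i.insertNth t ((EuclideanSpace.measurableEquiv (Fin m)) y)) := rfl

lemma hhG_convexOn (i : Fin (m+1)) (a b : Fin (m+1) → ℝ) (hab : ∀ j, a j < b j)
    {f : EuclideanSpace ℝ (Fin (m+1)) → ℝ} (hf : ConvexOn ℝ (hhBox a b) f) :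
    ConvexOn ℝ (Icc (a i) (b i)) (hhG i a b f) := by
  have hintt : ∀ t ∈ Icc (a i) (b i),
      IntegrableOn (fun y => f (hhIns i t y)) (hhBox (a ∘ i.succAbove) (b ∘ i.succAbove))
        volume :=
    fun t ht => hh_integrableOn (fun k => (hab _).le) (hh_convexOn_ins i a b hf t ht)
  refine ⟨convex_Icc _ _, ?_⟩
  intro t1 ht1 t2 ht2 s u hs hu hsu
  have hmid : s • t1 + u • t2 ∈ Icc (a i) (b i) := (convex_Icc (a i) (b i)) ht1 ht2 hs hu hsu
  have hptw : ∀ y ∈ hhBox (a ∘ i.succAbove) (b ∘ i.succAbove),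
      f (hhIns i (s • t1 + u • t2) y) ≤ s * f (hhIns i t1 y) + u * f (hhIns i t2 y) := by
    intro y hy
    have hyy : s • y + u • y = y := Convex.combo_self hsu y
    have hcomb := hhIns_combo i s u t1 t2 y y
    rw [hyy] at hcomb
    have h2 := hf.2 ((hhIns_mem i a b t1 y).2 ⟨ht1, hy⟩) ((hhIns_mem i a b t2 y).2 ⟨ht2, hy⟩)
      hs hu hsu
    rw [hcomb] at h2
    simpa [smul_eq_mul] using h2
  simp only [smul_eq_mul]
  calc hhG i a b f (s * t1 + u * t2)
      ≤ ∫ y in hhBox (a ∘ i.succAbove) (b ∘ i.succAbove),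
          (s * f (hhIns i t1 y) + u * f (hhIns i t2 y)) := by
        refine setIntegral_mono_on ?_ ?_ (isClosed_hhBox _ _).measurableSet ?_
        · simpa [smul_eq_mul] using hintt _ hmid
        · exact ((hintt t1 ht1).const_mul s).add ((hintt t2 ht2).const_mul u)
        · simpa [smul_eq_mul] using hptw
    _ = s * hhG i a b f t1 + u * hhG i a b f t2 := by
        rw [integral_add ((hintt t1 ht1).const_mul s) ((hintt t2 ht2).const_mul u),
          integral_const_mul, integral_const_mul]
        rfl

lemma hh_fubini (i : Fin (m+1)) (a b : Fin (m+1) → ℝ) (hab : ∀ j, a j < b j)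
    {f : EuclideanSpace ℝ (Fin (m+1)) → ℝ} (hf : ConvexOn ℝ (hhBox a b) f) :
    (∫ x in hhBox a b, f x) = (∫ t in Icc (a i) (b i), hhG i a b f t) ∧
      IntegrableOn (hhG i a b f) (Icc (a i) (b i)) volume := by
  classical
  set pibox : Set (Fin m → ℝ) :=
    Set.pi univ fun k => Icc (a (i.succAbove k)) (b (i.succAbove k)) with hpibox
  have hem := EuclideanSpace.volume_preserving_measurableEquiv (Fin m)
  set em := EuclideanSpace.measurableEquiv (Fin m) with hemd
  set Φ : (ℝ × (Fin m → ℝ)) ≃ᵐ EuclideanSpace ℝ (Fin (m+1)) :=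
    (MeasurableEquiv.piFinSuccAbove (fun _ : Fin (m+1) => ℝ) i).symm.trans
      (EuclideanSpace.measurableEquiv (Fin (m+1))).symm with hΦd
  have hΦmp : MeasurePreserving Φ volume volume :=
    ((volume_preserving_piFinSuccAbove (fun _ : Fin (m+1) => ℝ) i).symm).trans
      ((EuclideanSpace.volume_preserving_measurableEquiv (Fin (m+1))).symm)
  have hΦeq : ∀ (t : ℝ) (y : Fin m → ℝ), Φ (t, y) = hhIns i t (em.symm y) := by
    intro t y
    rw [hΦd, MeasurableEquiv.trans_apply, hhIns_def, MeasurableEquiv.apply_symm_apply]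
    congr 1
  have hempre : em ⁻¹' pibox = hhBox (a ∘ i.succAbove) (b ∘ i.succAbove) := by
    rw [hhBox_preimage]
    rfl
  have hΦpre : Φ ⁻¹' (hhBox a b) = (Icc (a i) (b i)) ×ˢ pibox := by
    ext z
    obtain ⟨t, y⟩ := z
    simp only [Set.mem_preimage, Set.mem_prod, hΦeq]
    rw [hhIns_mem]
    constructor
    · rintro ⟨h1, h2⟩
      refine ⟨h1, ?_⟩
      have : em.symm y ∈ em ⁻¹' pibox := by rw [hempre]; exact h2
      simpa using this
    · rintro ⟨h1, h2⟩
      refine ⟨h1, ?_⟩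
      rw [← hempre]
      simpa using h2
  have hWint : IntegrableOn f (hhBox a b) volume := hh_integrableOn (fun j => (hab j).le) hf
  have hboxmeas : MeasurableSet (hhBox a b) := (isClosed_hhBox a b).measurableSet
  have hprodint : IntegrableOn (fun z : ℝ × (Fin m → ℝ) => f (Φ z))
      ((Icc (a i) (b i)) ×ˢ pibox) volume := by
    have h2 := (hΦmp.restrict_preimage hboxmeas).integrable_comp_emb (g := f) Φ.measurableEmbedding
    have h3 := h2.mpr hWint
    rwa [hΦpre] at h3
  have hsetint : ∫ x in hhBox a b, f x = ∫ z in (Icc (a i) (b i)) ×ˢ pibox, f (Φ z) := by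
    rw [← hΦpre, hΦmp.setIntegral_preimage_emb Φ.measurableEmbedding]
  have hinner : ∀ t : ℝ, (∫ y in pibox, f (Φ (t, y))) = hhG i a b f t := by
    intro t
    have h3 := hem.setIntegral_preimage_emb em.measurableEmbedding
      (fun y => f (Φ (t, y))) pibox
    rw [← h3, hempre]
    refine setIntegral_congr_fun (isClosed_hhBox _ _).measurableSet fun x _ => ?_
    rw [hΦeq, MeasurableEquiv.symm_apply_apply]
  have hprodint' : Integrable (fun z : ℝ × (Fin m → ℝ) => f (Φ z))
      ((volume.restrict (Icc (a i) (b i))).prod (volume.restrict pibox)) := by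
    rw [Measure.prod_restrict, ← Measure.volume_eq_prod]
    exact hprodint
  constructor
  · rw [hsetint]
    have h4 : ∫ z in (Icc (a i) (b i)) ×ˢ pibox, f (Φ z)
        = ∫ z in (Icc (a i) (b i)) ×ˢ pibox, f (Φ z)
          ∂((volume : Measure ℝ).prod (volume : Measure (Fin m → ℝ))) := by
      rw [← Measure.volume_eq_prod]
    rw [h4, setIntegral_prod _ (by rwa [← Measure.volume_eq_prod] : IntegrableOn _ _ _)]
    exact setIntegral_congr_fun measurableSet_Icc fun t _ => hinner t
  · have h6 := hprodint'.integral_prod_left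
    refine h6.congr (ae_of_all _ fun t => ?_)
    exact hinner t


lemma hh_main (m : ℕ) (a b : Fin (m+1) → ℝ) (hab : ∀ j, a j < b j)
    (f : EuclideanSpace ℝ (Fin (m+1)) → ℝ) (hf : ConvexOn ℝ (hhBox a b) f) (i : Fin (m+1)) :
    2 * ((μH[(m:ℝ)] : Measure (EuclideanSpace ℝ (Fin (m+1))))
          {x ∈ hhBox a b | x i = a i}).toReal * ⨍ x in hhBox a b, f x ≤
      (∫ x in {x ∈ hhBox a b | x i = a i}, f x ∂(μH[(m:ℝ)])) +
      ∫ x in {x ∈ hhBox a b | x i = b i}, f x ∂(μH[(m:ℝ)]) := by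
  obtain ⟨c, hc0, hcμ⟩ := hh_hausdorff_eq_smul m
  have hIccA : a i ∈ Icc (a i) (b i) := left_mem_Icc.2 (hab i).le
  have hIccB : b i ∈ Icc (a i) (b i) := right_mem_Icc.2 (hab i).le
  have hfacA := hh_facet_integral i a b f (a i) hIccA c hcμ
  have hfacB := hh_facet_integral i a b f (b i) hIccB c hcμ
  have hmea := hh_facet_measure i a b (a i) hIccA c hcμ
  obtain ⟨hFub, hGint⟩ := hh_fubini i a b hab hf
  have hGconv := hhG_convexOn i a b hab hf
  have hHH := hh_one_dim (hab i) hGconv hGint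
  set cR := ((c : ℝ≥0∞)).toReal with hcR
  have hcRpos : 0 < cR := by
    rw [hcR]
    exact ENNReal.toReal_pos (by exact_mod_cast hc0.ne') (by simp)
  set P : ℝ := ∏ k : Fin m, (b (i.succAbove k) - a (i.succAbove k)) with hP
  have hPpos : 0 < P := Finset.prod_pos fun k _ => sub_pos.2 (hab _)
  set D := b i - a i with hD
  have hDpos : 0 < D := sub_pos.2 (hab i)
  have hvolB' : (volume (hhBox (a ∘ i.succAbove) (b ∘ i.succAbove))).toReal = P := by
    rw [hh_volume_box, ENNReal.toReal_prod, hP]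
    exact Finset.prod_congr rfl fun k _ => ENNReal.toReal_ofReal (sub_nonneg.2 (hab _).le)
  have hμS : ((μH[(m:ℝ)] : Measure (EuclideanSpace ℝ (Fin (m+1))))
      {x ∈ hhBox a b | x i = a i}).toReal = cR * P := by
    rw [hmea]
    have h0 : (c • volume (hhBox (a ∘ i.succAbove) (b ∘ i.succAbove)))
        = (c : ℝ≥0∞) * volume (hhBox (a ∘ i.succAbove) (b ∘ i.succAbove)) := rfl
    rw [h0, ENNReal.toReal_mul, hvolB']
  have hvolW : (volume (hhBox a b)).toReal = D * P := by
    rw [hh_volume_box, ENNReal.toReal_prod]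
    have h1 : ∀ j, (ENNReal.ofReal (b j - a j)).toReal = b j - a j :=
      fun j => ENNReal.toReal_ofReal (sub_nonneg.2 (hab j).le)
    calc (∏ j, (ENNReal.ofReal (b j - a j)).toReal) = ∏ j, (b j - a j) :=
      Finset.prod_congr rfl fun j _ => h1 j
    _ = D * P := by rw [Fin.prod_univ_succAbove (fun j => b j - a j) i]
  have havg : ⨍ x in hhBox a b, f x = (D * P)⁻¹ * ∫ x in hhBox a b, f x := by
    rw [setAverage_eq, measureReal_def, hvolW, smul_eq_mul]
  rw [hμS, havg, hfacA, hfacB, hFub]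
  set I := ∫ t in Icc (a i) (b i), hhG i a b f t with hI
  set gA := hhG i a b f (a i) with hgA
  set gB := hhG i a b f (b i) with hgB
  have hLHS : 2 * (cR * P) * ((D * P)⁻¹ * I) = (cR / D) * (2 * I) := by
    field_simp
  rw [hLHS]
  have h2I : 2 * I ≤ D * (gA + gB) := by
    have h7 : I ≤ D * (gA + gB) / 2 := hHH
    set X := D * (gA + gB) with hX
    linarith
  calc (cR / D) * (2 * I) ≤ (cR / D) * (D * (gA + gB)) :=
    mul_le_mul_of_nonneg_left h2I (div_nonneg hcRpos.le hDpos.le)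
  _ = cR * gA + cR * gB := by
    field_simp


/-- For a box `W = ∏ [aᵢ, bᵢ]`, a convex function `f : W → ℝ`, and each pair of opposite
facets `Sᵢ = {x ∈ W : xᵢ = aᵢ}` and `Sᵢ* = {x ∈ W : xᵢ = bᵢ}`, one has
`2 |Sᵢ| ⨍_W f ≤ ∫_{Sᵢ} f + ∫_{Sᵢ*} f`, the facet integrals being with respect to
`(n-1)`-dimensional Hausdorff measure. -/
theorem stmt_5 {n : ℕ} (hn : 0 < n) (a b : Fin n → ℝ) (hab : ∀ i, a i < b i)
    (W : Set (EuclideanSpace ℝ (Fin n)))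
    (hW : W = {x : EuclideanSpace ℝ (Fin n) | ∀ j, x j ∈ Set.Icc (a j) (b j)})
    (f : EuclideanSpace ℝ (Fin n) → ℝ) (hf : ConvexOn ℝ W f) (i : Fin n)
    (S Sstar : Set (EuclideanSpace ℝ (Fin n)))
    (hS : S = {x ∈ W | x i = a i}) (hSstar : Sstar = {x ∈ W | x i = b i}) :
    2 * (μH[(n : ℝ) - 1] S).toReal * ⨍ x in W, f x ≤
      (∫ x in S, f x ∂(μH[(n : ℝ) - 1])) + ∫ x in Sstar, f x ∂(μH[(n : ℝ) - 1]) := by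
  obtain ⟨m, rfl⟩ : ∃ m, n = m + 1 := ⟨n - 1, (Nat.succ_pred_eq_of_pos hn).symm⟩
  subst hS hSstar hW
  have hexp : ((m + 1 : ℕ) : ℝ) - 1 = (m : ℝ) := by push_cast; ring
  rw [hexp]
  exact hh_main m a b hab f hf i
end
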